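/- Majorant Lemma: let v be analytic in a neighborhood of a real point r, and let u(s) = Σ_{n≥0} (|v^{(n)}(r)|/n!)(s-r)^n be its majorant. Consider solutions of ds/dt = v(s), s(t_0) = r and ds/dt = u(s), s(t_0) = r, and let t_v (resp. t_u) be the radius of convergence of the Taylor series in t of v(s(t)) (resp. u(s(t))) about t_0. Then t_v ≥ t_u. -/

import Mathlib

open Complex Finset

private lemma sum_pascal (a b : ℕ → ℂ) (n : ℕ) :
    ∑ j ∈ range (n+1), (n.choose j : ℂ) * (a (j+1) * b (n-j) + a j * b (n-j+1))
      = ∑ j ∈ range (n+2), ((n+1).choose j : ℂ) * (a j * b (n+1-j)) := by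
  have h1 : ∑ j ∈ range (n+2), ((n+1).choose j : ℂ) * (a j * b (n+1-j))
      = a 0 * b (n+1) + ∑ j ∈ range (n+1), ((n+1).choose (j+1) : ℂ) * (a (j+1) * b (n-j)) := by
    rw [Finset.sum_range_succ' (fun j => ((n+1).choose j : ℂ) * (a j * b (n+1-j)))]
    simp [add_comm]
  have h2 : ∀ j ∈ range (n+1), ((n+1).choose (j+1) : ℂ) * (a (j+1) * b (n-j))
      = (n.choose j : ℂ) * (a (j+1) * b (n-j)) + (n.choose (j+1) : ℂ) * (a (j+1) * b (n-j)) := by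
    intro j _
    rw [Nat.choose_succ_succ]
    push_cast
    ring
  rw [h1, Finset.sum_congr rfl h2, Finset.sum_add_distrib]
  have h3 : ∑ j ∈ range (n+1), (n.choose j : ℂ) * (a j * b (n-j+1))
      = a 0 * b (n+1) + ∑ j ∈ range (n+1), (n.choose (j+1) : ℂ) * (a (j+1) * b (n-j)) := by
    rw [Finset.sum_range_succ' (fun j => (n.choose j : ℂ) * (a j * b (n-j+1)))]
    rw [Finset.sum_range_succ (fun j => (n.choose (j+1) : ℂ) * (a (j+1) * b (n-j)))]
    simp only [Nat.choose_zero_right, Nat.cast_one, one_mul, Nat.sub_zero,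
      Nat.choose_succ_self, Nat.cast_zero, zero_mul, add_zero]
    rw [add_comm]
    congr 1
    apply Finset.sum_congr rfl
    intro j hj
    simp only [Finset.mem_range] at hj
    have hj' : n - (j+1) + 1 = n - j := by omega
    rw [hj']
  simp only [mul_add, Finset.sum_add_distrib, h3]
  ring

private lemma analyticOnNhd_iteratedDeriv {f : ℂ → ℂ} {U : Set ℂ}
    (hf : AnalyticOnNhd ℂ f U) (n : ℕ) : AnalyticOnNhd ℂ (iteratedDeriv n f) U := by
  induction n with
  | zero => simpa [iteratedDeriv_zero] using hf
  | succ n ih => rw [iteratedDeriv_succ]; exact ih.deriv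

private lemma leibniz {f g : ℂ → ℂ} {U : Set ℂ} (hU : IsOpen U)
    (hf : AnalyticOnNhd ℂ f U) (hg : AnalyticOnNhd ℂ g U) :
    ∀ n : ℕ, ∀ x ∈ U, iteratedDeriv n (fun s => f s * g s) x
      = ∑ j ∈ range (n+1), (n.choose j : ℂ) * (iteratedDeriv j f x * iteratedDeriv (n-j) g x) := by
  intro n
  induction n with
  | zero => intro x _; simp
  | succ n ih =>
    intro x hx
    have heq : Set.EqOn (iteratedDeriv n (fun s => f s * g s))
        (fun y => ∑ j ∈ range (n+1), (n.choose j : ℂ) *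
          (iteratedDeriv j f y * iteratedDeriv (n-j) g y)) U := fun y hy => ih y hy
    have hev : iteratedDeriv n (fun s => f s * g s) =ᶠ[nhds x]
        (fun y => ∑ j ∈ range (n+1), (n.choose j : ℂ) *
          (iteratedDeriv j f y * iteratedDeriv (n-j) g y)) :=
      Filter.eventuallyEq_of_mem (hU.mem_nhds hx) heq
    rw [iteratedDeriv_succ, hev.deriv_eq]
    have hdiff : ∀ k : ℕ, DifferentiableAt ℂ (iteratedDeriv k f) x :=
      fun k => ((analyticOnNhd_iteratedDeriv hf k) x hx).differentiableAt
    have hdiffg : ∀ k : ℕ, DifferentiableAt ℂ (iteratedDeriv k g) x :=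
      fun k => ((analyticOnNhd_iteratedDeriv hg k) x hx).differentiableAt
    rw [deriv_fun_sum (fun j _ => by
      exact (((hdiff j).mul (hdiffg (n-j))).const_mul _))]
    have hterm : ∀ j ∈ range (n+1),
        deriv (fun y => (n.choose j : ℂ) * (iteratedDeriv j f y * iteratedDeriv (n-j) g y)) x
        = (n.choose j : ℂ) * (iteratedDeriv (j+1) f x * iteratedDeriv (n-j) g x
            + iteratedDeriv j f x * iteratedDeriv (n-j+1) g x) := by
      intro j _
      rw [deriv_const_mul (d := fun y => iteratedDeriv j f y * iteratedDeriv (n-j) g y) _ ((hdiff j).mul (hdiffg (n-j))),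
        deriv_fun_mul (hdiff j) (hdiffg (n-j)), ← iteratedDeriv_succ, ← iteratedDeriv_succ]
    rw [Finset.sum_congr rfl hterm]
    rw [sum_pascal (fun k => iteratedDeriv k f x) (fun k => iteratedDeriv k g x) n]

theorem majorant_lemma
    (v u : ℂ → ℂ) (r : ℝ)
    (hv : AnalyticAt ℂ v (r : ℂ)) (hvr : v (r : ℂ) ≠ 0)
    (hu : AnalyticAt ℂ u (r : ℂ))
    (hmaj : ∀ n : ℕ, iteratedDeriv n u (r : ℂ) = (‖iteratedDeriv n v (r : ℂ)‖ : ℂ))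
    (pv pu : FormalMultilinearSeries ℂ ℂ ℂ)
    (hpv : ∀ n : ℕ, pv n = ContinuousMultilinearMap.mkPiRing ℂ (Fin n)
      (((fun f : ℂ → ℂ => fun s => v s * deriv f s)^[n] v) (r : ℂ) / (n.factorial : ℂ)))
    (hpu : ∀ n : ℕ, pu n = ContinuousMultilinearMap.mkPiRing ℂ (Fin n)
      (((fun f : ℂ → ℂ => fun s => u s * deriv f s)^[n] u) (r : ℂ) / (n.factorial : ℂ))) :
    pu.radius ≤ pv.radius := by
  classical
  set U : Set ℂ := {y | AnalyticAt ℂ v y ∧ AnalyticAt ℂ u y} with hUdef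
  have hUopen : IsOpen U := (isOpen_analyticAt ℂ v).inter (isOpen_analyticAt ℂ u)
  have hrU : (r : ℂ) ∈ U := ⟨hv, hu⟩
  have hvU : AnalyticOnNhd ℂ v U := fun y hy => hy.1
  have huU : AnalyticOnNhd ℂ u U := fun y hy => hy.2
  set Dv : ℕ → ℂ → ℂ := fun n => (fun f : ℂ → ℂ => fun s => v s * deriv f s)^[n] v with hDv
  set Du : ℕ → ℂ → ℂ := fun n => (fun f : ℂ → ℂ => fun s => u s * deriv f s)^[n] u with hDu
  have key : ∀ n : ℕ, (AnalyticOnNhd ℂ (Dv n) U ∧ AnalyticOnNhd ℂ (Du n) U) ∧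
      ∀ k : ℕ, ∃ x : ℝ, 0 ≤ x ∧ iteratedDeriv k (Du n) (r : ℂ) = (x : ℂ) ∧
        ‖iteratedDeriv k (Dv n) (r : ℂ)‖ ≤ x := by
    intro n
    induction n with
    | zero =>
      refine ⟨⟨hvU, huU⟩, fun k => ⟨‖iteratedDeriv k v (r : ℂ)‖, ?_, ?_, ?_⟩⟩
      · exact norm_nonneg _
      · simpa [Du] using hmaj k
      · simp [Dv]
    | succ n ih =>
      obtain ⟨⟨hDvA, hDuA⟩, hkey⟩ := ih
      have hDvs : Dv (n+1) = fun s => v s * deriv (Dv n) s :=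
        Function.iterate_succ_apply' _ _ _
      have hDus : Du (n+1) = fun s => u s * deriv (Du n) s :=
        Function.iterate_succ_apply' _ _ _
      have hdv : AnalyticOnNhd ℂ (deriv (Dv n)) U := hDvA.deriv
      have hdu : AnalyticOnNhd ℂ (deriv (Du n)) U := hDuA.deriv
      have hAv : AnalyticOnNhd ℂ (Dv (n+1)) U := by
        rw [hDvs]; exact fun y hy => ((hvU y hy).mul (hdv y hy))
      have hAu : AnalyticOnNhd ℂ (Du (n+1)) U := by
        rw [hDus]; exact fun y hy => ((huU y hy).mul (hdu y hy))
      refine ⟨⟨hAv, hAu⟩, fun k => ?_⟩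
      choose X hX0 hXu hXv using hkey
      refine ⟨∑ j ∈ range (k+1), (k.choose j : ℝ) *
        (‖iteratedDeriv j v (r : ℂ)‖ * X (k-j+1)), ?_, ?_, ?_⟩
      · apply Finset.sum_nonneg
        intro j _
        have := hX0 (k-j+1)
        positivity
      · rw [hDus]
        rw [leibniz hUopen huU hdu k (r : ℂ) hrU]
        push_cast
        apply Finset.sum_congr rfl
        intro j _
        rw [hmaj j]
        rw [← iteratedDeriv_succ', hXu (k - j + 1)]
      · rw [hDvs]
        rw [leibniz hUopen hvU hdv k (r : ℂ) hrU]
        refine le_trans (norm_sum_le _ _) (Finset.sum_le_sum ?_)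
        intro j _
        rw [norm_mul, norm_mul, Complex.norm_natCast]
        apply mul_le_mul_of_nonneg_left _ (by positivity)
        apply mul_le_mul_of_nonneg_left _ (norm_nonneg _)
        rw [← iteratedDeriv_succ']
        exact hXv (k - j + 1)
  -- coefficient comparison
  have hcoef : ∀ n : ℕ, ‖pv n‖ ≤ ‖pu n‖ := by
    intro n
    obtain ⟨x, hx0, hxu, hxv⟩ := (key n).2 0
    simp only [iteratedDeriv_zero] at hxu hxv
    rw [hpv n, hpu n, ContinuousMultilinearMap.norm_mkPiRing,
      ContinuousMultilinearMap.norm_mkPiRing]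
    rw [norm_div, norm_div]
    have h1 : ‖Dv n (r : ℂ)‖ ≤ ‖Du n (r : ℂ)‖ := by
      rw [hxu, Complex.norm_real, Real.norm_of_nonneg hx0] at *
      exact hxv
    gcongr
  refine ENNReal.le_of_forall_nnreal_lt fun ρ hρ => ?_
  obtain ⟨C, hC0, hC⟩ := pu.norm_mul_pow_le_of_lt_radius hρ
  apply pv.le_radius_of_bound C
  intro n
  calc ‖pv n‖ * (ρ : ℝ) ^ n ≤ ‖pu n‖ * (ρ : ℝ) ^ n := by gcongr; exact hcoef n
    _ ≤ C := hC n
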